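/- arXiv:1103.2222 — 2 statements merged into one kernel-verified Lean document; each statement's English description precedes it below -/
import Mathlib

section
/- Let (σ_{n,1})_{n∈ℕ} and (σ_{n,2})_{n∈ℕ} be two sequences of strictly positive real numbers, and for i = 1, 2 let ν_i be the infinite product on ℝ^ℕ of the centered Gaussian measures N(0, σ_{n,i}²). If the series ∑_{n∈ℕ} (σ_{n,1}/σ_{n,2} − 1)² diverges (is not summable), then ν_1 and ν_2 are mutually singular: there exists a measurable set A ⊆ ℝ^ℕ with ν_1(A) = 1 and ν_2(A) = 0. -/
open MeasureTheory ProbabilityTheory Filter Set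
open scoped ENNReal NNReal Real

section Aux

lemma gauss_exp_int {a : ℝ} (ha : 0 < a) {v : ℝ≥0} (hv : v ≠ 0) :
    ∫ x, Real.exp (-(a * x ^ 2)) ∂(gaussianReal 0 v) = 1 / Real.sqrt (2 * v * a + 1) := by
  have hv' : (0:ℝ) < v := by
    have := hv; positivity
  rw [gaussianReal_of_var_ne_zero 0 hv, gaussianPDF_def]
  have hmeas : Measurable fun x => (gaussianPDFReal 0 v x).toNNReal :=
    (measurable_gaussianPDFReal 0 v).real_toNNReal
  have h0 : (fun x => ENNReal.ofReal (gaussianPDFReal 0 v x))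
      = fun x => ((gaussianPDFReal 0 v x).toNNReal : ℝ≥0∞) := rfl
  rw [h0, integral_withDensity_eq_integral_smul hmeas]
  have hpos : ∀ x : ℝ, ((gaussianPDFReal 0 v x).toNNReal : ℝ) = gaussianPDFReal 0 v x := by
    intro x
    exact Real.coe_toNNReal _ (gaussianPDFReal_nonneg 0 v x)
  simp_rw [NNReal.smul_def, smul_eq_mul, hpos, gaussianPDFReal, mul_assoc]
  set b : ℝ := a + 1/(2*v) with hbdef
  have hb : (0:ℝ) < b := by positivity
  have key : ∀ x : ℝ, Real.exp (-(x-0)^2/(2*v)) * Real.exp (-(a * x^2))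
      = Real.exp (-b * x^2) := by
    intro x
    rw [← Real.exp_add]
    have h2v : (2*(v:ℝ)) ≠ 0 := by positivity
    congr 1
    rw [hbdef]
    field_simp
    ring
  simp_rw [key]
  rw [integral_const_mul, integral_gaussian]
  have h2vb : 2 * (v:ℝ) * a + 1 = 2 * π * v * b / π := by
    rw [hbdef]
    field_simp [hv'.ne']
  have hs1 : Real.sqrt (2 * π * v) ≠ 0 := by
    refine Real.sqrt_ne_zero'.2 (by positivity)
  have hs2 : Real.sqrt (2 * (v:ℝ) * a + 1) ≠ 0 := by
    refine Real.sqrt_ne_zero'.2 (by positivity)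
  have final : (Real.sqrt (2 * π * (v:ℝ)))⁻¹ * Real.sqrt (π / b)
      = 1 / Real.sqrt (2 * (v:ℝ) * a + 1) := by
    rw [eq_div_iff hs2, mul_assoc, ← Real.sqrt_mul (by positivity)]
    have : π / b * (2 * (v:ℝ) * a + 1) = 2 * π * v := by
      rw [h2vb, hbdef]
      field_simp [hv'.ne']
    rw [this, inv_mul_cancel₀ hs1]
  calc (Real.sqrt (2 * (π * (v:ℝ))))⁻¹ * Real.sqrt (π / b)
      = (Real.sqrt (2 * π * (v:ℝ)))⁻¹ * Real.sqrt (π / b) := by ring_nf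
    _ = 1 / Real.sqrt (2 * (v:ℝ) * a + 1) := final
    _ = 1 / Real.sqrt (2 * ((v:ℝ) * a) + 1) := by ring_nf

lemma exp_moment {s τ : ℝ} (hs : 0 < s) (hτ : 0 < τ) :
    ∫ t, Real.exp (-(1 / (2 * s ^ 2) * t ^ 2)) ∂(gaussianReal 0 ((τ ^ 2).toNNReal))
      = 1 / Real.sqrt (1 + (τ / s) ^ 2) := by
  have hv : ((τ ^ 2).toNNReal) ≠ 0 := by
    simp only [ne_eq, Real.toNNReal_eq_zero, not_le]
    positivity
  rw [gauss_exp_int (by positivity) hv]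
  congr 2
  have hcoe : (((τ ^ 2).toNNReal : ℝ≥0) : ℝ) = τ ^ 2 := Real.coe_toNNReal _ (by positivity)
  rw [hcoe]
  field_simp
  ring

lemma pi_map_eval {N : ℕ} (μ : Fin N → Measure ℝ) [∀ i, IsProbabilityMeasure (μ i)] (i : Fin N) :
    Measure.map (Function.eval i) (Measure.pi μ) = μ i := by
  ext s hs
  rw [Measure.map_apply (measurable_pi_apply i) hs]
  show Measure.pi μ (Function.eval i ⁻¹' s) = μ i s
  rw [← Set.univ_pi_update_univ, Measure.pi_pi]
  rw [Finset.prod_eq_single i (fun j _ hj => by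
      rw [Function.update_of_ne hj]; exact measure_univ)
    (fun h => absurd (Finset.mem_univ i) h)]
  rw [Function.update_self]

variable {σ : ℕ → ℝ} {ν : Measure (ℕ → ℝ)} [IsProbabilityMeasure ν]

omit [IsProbabilityMeasure ν] in
lemma marginal_eval
    (hν : ∀ N : ℕ, Measure.map (fun x (i : Fin N) => x i) ν
      = Measure.pi (fun i : Fin N => gaussianReal 0 ((σ i ^ 2).toNNReal)))
    (k : ℕ) :
    Measure.map (fun x : ℕ → ℝ => x k) ν = gaussianReal 0 ((σ k ^ 2).toNNReal) := by
  have hproj : Measurable (fun (x : ℕ → ℝ) (i : Fin (k+1)) => x i) :=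
    measurable_pi_lambda _ (fun i => measurable_pi_apply _)
  have hcomp : (fun x : ℕ → ℝ => x k)
      = Function.eval (⟨k, Nat.lt_succ_self k⟩ : Fin (k+1))
        ∘ (fun (x : ℕ → ℝ) (i : Fin (k+1)) => x i) := rfl
  rw [hcomp, ← Measure.map_map (measurable_pi_apply _) hproj, hν (k+1), pi_map_eval]

omit [IsProbabilityMeasure ν] in
lemma indep_coords
    (hν : ∀ N : ℕ, Measure.map (fun x (i : Fin N) => x i) ν
      = Measure.pi (fun i : Fin N => gaussianReal 0 ((σ i ^ 2).toNNReal)))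
    {m n : ℕ} (hmn : m ≠ n) :
    IndepFun (fun x : ℕ → ℝ => x m) (fun x : ℕ → ℝ => x n) ν := by
  rw [indepFun_iff_measure_inter_preimage_eq_mul]
  intro s t hs ht
  set N := max m n + 1 with hN
  have hm : m < N := lt_of_le_of_lt (le_max_left m n) (Nat.lt_succ_self _)
  have hn : n < N := lt_of_le_of_lt (le_max_right m n) (Nat.lt_succ_self _)
  set i : Fin N := ⟨m, hm⟩
  set j : Fin N := ⟨n, hn⟩
  have hij : i ≠ j := by simp [i, j, Fin.ext_iff, hmn]
  set μs : Fin N → Measure ℝ := fun i => gaussianReal 0 ((σ (i : ℕ) ^ 2).toNNReal) with hμs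
  have hproj : Measurable (fun (x : ℕ → ℝ) (i : Fin N) => x i) :=
    measurable_pi_lambda _ (fun i => measurable_pi_apply _)
  have hset : (fun x : ℕ → ℝ => x m) ⁻¹' s ∩ (fun x : ℕ → ℝ => x n) ⁻¹' t
      = (fun (x : ℕ → ℝ) (i : Fin N) => x i) ⁻¹'
        (Function.eval i ⁻¹' s ∩ Function.eval j ⁻¹' t) := rfl
  have hmeasset : MeasurableSet ((Function.eval i ⁻¹' s ∩ Function.eval j ⁻¹' t : Set (Fin N → ℝ))) :=
    by
      apply MeasurableSet.inter
      · exact hs.preimage (measurable_pi_apply i)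
      · exact ht.preimage (measurable_pi_apply j)
  have hpi : (Function.eval i ⁻¹' s ∩ Function.eval j ⁻¹' t : Set (Fin N → ℝ))
      = Set.pi univ (Function.update (Function.update (fun _ => univ) i s) j t) := by
    ext x
    simp only [Set.mem_inter_iff, Set.mem_preimage, Set.mem_pi, Set.mem_univ, true_implies]
    constructor
    · rintro ⟨h1, h2⟩ k
      rcases eq_or_ne k j with rfl | hkj
      · rw [Function.update_self]; exact h2
      rcases eq_or_ne k i with rfl | hki
      · rw [Function.update_of_ne hkj, Function.update_self]; exact h1
      · rw [Function.update_of_ne hkj, Function.update_of_ne hki]; trivial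
    · intro h
      constructor
      · have := h i
        rwa [Function.update_of_ne hij, Function.update_self] at this
      · have := h j
        rwa [Function.update_self] at this
  have hLHS : ν ((fun x : ℕ → ℝ => x m) ⁻¹' s ∩ (fun x : ℕ → ℝ => x n) ⁻¹' t)
      = μs i s * μs j t := by
    rw [hset, ← Measure.map_apply hproj hmeasset, hν N, hpi, Measure.pi_pi]
    have hfun : (fun k => μs k (Function.update (Function.update (fun _ => univ) i s) j t k))
        = Function.update (Function.update (fun k => μs k univ) i (μs i s)) j (μs j t) := by
      funext k
      rcases eq_or_ne k j with rfl | hkj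
      · rw [Function.update_self, Function.update_self]
      rcases eq_or_ne k i with rfl | hki
      · rw [Function.update_of_ne hkj, Function.update_self,
          Function.update_of_ne hkj, Function.update_self]
      · rw [Function.update_of_ne hkj, Function.update_of_ne hki,
          Function.update_of_ne hkj, Function.update_of_ne hki]
    rw [hfun, Finset.prod_update_of_mem (Finset.mem_univ j),
      Finset.prod_update_of_mem (by simp [hij] : i ∈ Finset.univ \ {j})]
    have h1 : ∏ x ∈ (Finset.univ \ {j}) \ {i}, (μs x) univ = 1 :=
      Finset.prod_eq_one (fun k _ => measure_univ)
    rw [h1, mul_one, mul_comm]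
  have hone : ∀ (k : ℕ), k < N → ∀ (u : Set ℝ), MeasurableSet u →
      ν ((fun x : ℕ → ℝ => x k) ⁻¹' u) = gaussianReal 0 ((σ k ^ 2).toNNReal) u := by
    intro k hk u hu
    rw [← Measure.map_apply (measurable_pi_apply k) hu, marginal_eval hν k]
  rw [hLHS, hone m hm s hs, hone n hn t ht]

set_option maxHeartbeats 1000000 in
lemma key_ineq {r : ℝ} (hr : 0 < r)
    (h : (1 / Real.sqrt (1 + r ^ 2) - 1 / Real.sqrt 2) ^ 2
      < (2 / Real.sqrt 5 - 1 / Real.sqrt 2) ^ 2) :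
    (r - 1) ^ 2 ≤ 64 * (1 / Real.sqrt (1 + r ^ 2) - 1 / Real.sqrt 2) ^ 2 := by
  set a : ℝ := Real.sqrt (1 + r ^ 2) with ha
  set b : ℝ := Real.sqrt 2 with hb
  set cc : ℝ := Real.sqrt 5 with hcc
  have ha0 : 0 < a := Real.sqrt_pos.2 (by positivity)
  have hb0 : 0 < b := Real.sqrt_pos.2 (by norm_num)
  have hc0 : 0 < cc := Real.sqrt_pos.2 (by norm_num)
  have ha2 : a ^ 2 = 1 + r ^ 2 := Real.sq_sqrt (by positivity)
  have hb2 : b ^ 2 = 2 := Real.sq_sqrt (by norm_num)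
  have hc2 : cc ^ 2 = 5 := Real.sq_sqrt (by norm_num)
  have hbub : b ≤ 1415/1000 := by nlinarith [sq_nonneg (b - 1415/1000)]
  have hblb : 1414/1000 ≤ b := by nlinarith [sq_nonneg (b - 1414/1000)]
  have hcub : cc ≤ 2237/1000 := by nlinarith [sq_nonneg (cc - 2237/1000)]
  have hclb : 2236/1000 ≤ cc := by nlinarith [sq_nonneg (cc - 2236/1000)]
  have hgap : 0 < 2 / cc - 1 / b := by
    rw [sub_pos, div_lt_div_iff₀ hb0 hc0]
    nlinarith
  have hrlo : 1 / 2 ≤ r := by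
    by_contra hlt
    push_neg at hlt
    have haup : a ^ 2 < 5 / 4 := by nlinarith
    have h1 : 2 / cc < 1 / a := by
      rw [div_lt_div_iff₀ hc0 ha0]
      nlinarith
    have h2 : 2 / cc - 1 / b < 1 / a - 1 / b := by linarith
    nlinarith [sq_nonneg (1 / a - 1 / b), sq_nonneg (2 / cc - 1 / b)]
  have hrhi : r ≤ 2 := by
    by_contra hlt
    push_neg at hlt
    have haup : 5 < a ^ 2 := by nlinarith
    have h1 : 1 / a < 1 / cc := by
      rw [div_lt_div_iff₀ ha0 hc0]
      nlinarith
    have h3b : 3 * b ≤ 2 * cc := by linarith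
    have h2 : 2 / cc - 1 / b ≤ 1 / b - 1 / cc := by
      rw [div_sub_div _ _ hc0.ne' hb0.ne', div_sub_div _ _ hb0.ne' hc0.ne',
        div_le_div_iff₀ (by positivity) (by positivity)]
      nlinarith [mul_nonneg (mul_pos hb0 hc0).le (by linarith : (0:ℝ) ≤ 2 * cc - 3 * b)]
    nlinarith [sq_nonneg (1 / a - 1 / b), sq_nonneg (2 / cc - 1 / b)]
  have haub : a ≤ 2237/1000 := by nlinarith [sq_nonneg (a - 2237/1000)]
  have hprod : (1 / a - 1 / b) * (a * b * (a + b)) = 1 - r ^ 2 := by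
    field_simp
    linear_combination hb2 - ha2
  have hab : a * b ≤ 2237/1000 * (1415/1000) :=
    mul_le_mul haub hbub hb0.le (by norm_num)
  have hsum : a + b ≤ 2237/1000 + 1415/1000 := add_le_add haub hbub
  have hD : a * b * (a + b) ≤ 8 * (1 + r) := by
    have h8 : a * b * (a + b) ≤ (2237/1000 * (1415/1000)) * (2237/1000 + 1415/1000) :=
      mul_le_mul hab hsum (by positivity) (by positivity)
    nlinarith
  have hDpos : 0 < a * b * (a + b) := by positivity
  have h7 : (0:ℝ) < (1 + r) ^ 2 := by positivity
  have h3 : (r - 1) ^ 2 * (1 + r) ^ 2 ≤ (64 * (1 / a - 1 / b) ^ 2) * (1 + r) ^ 2 := by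
    have h4 : (r - 1) ^ 2 * (1 + r) ^ 2 = ((1 / a - 1 / b) * (a * b * (a + b))) ^ 2 := by
      rw [hprod]; ring
    have h6 : (a * b * (a + b)) ^ 2 ≤ 64 * (1 + r) ^ 2 := by nlinarith
    calc (r - 1) ^ 2 * (1 + r) ^ 2 = (1 / a - 1 / b) ^ 2 * (a * b * (a + b)) ^ 2 := by
          rw [h4]; ring
      _ ≤ (1 / a - 1 / b) ^ 2 * (64 * (1 + r) ^ 2) :=
          mul_le_mul_of_nonneg_left h6 (sq_nonneg _)
      _ = (64 * (1 / a - 1 / b) ^ 2) * (1 + r) ^ 2 := by ring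
  exact le_of_mul_le_mul_right h3 h7

lemma summable_transfer {r : ℕ → ℝ} (hr : ∀ n, 0 < r n)
    (h : Summable (fun n => (1 / Real.sqrt (1 + r n ^ 2) - 1 / Real.sqrt 2) ^ 2)) :
    Summable (fun n => (r n - 1) ^ 2) := by
  have hδ : 0 < (2 / Real.sqrt 5 - 1 / Real.sqrt 2) ^ 2 := by
    have h58 : Real.sqrt 5 < 2 * Real.sqrt 2 := by
      have h1 : Real.sqrt 5 < Real.sqrt 8 := Real.sqrt_lt_sqrt (by norm_num) (by norm_num)
      have h8 : Real.sqrt 8 = 2 * Real.sqrt 2 := by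
        rw [show (8:ℝ) = 2 ^ 2 * 2 by norm_num, Real.sqrt_mul (by positivity),
          Real.sqrt_sq (by norm_num)]
      linarith
    have hb0 : 0 < Real.sqrt 2 := Real.sqrt_pos.2 (by norm_num)
    have hc0 : 0 < Real.sqrt 5 := Real.sqrt_pos.2 (by norm_num)
    have hpos : 0 < 2 / Real.sqrt 5 - 1 / Real.sqrt 2 := by
      rw [sub_pos, div_lt_div_iff₀ hb0 hc0]
      nlinarith
    positivity
  have h0 := h.tendsto_atTop_zero
  have hev : ∀ᶠ n in atTop, (1 / Real.sqrt (1 + r n ^ 2) - 1 / Real.sqrt 2) ^ 2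
      < (2 / Real.sqrt 5 - 1 / Real.sqrt 2) ^ 2 := h0.eventually_lt_const hδ
  obtain ⟨K, hK⟩ := eventually_atTop.1 hev
  refine (summable_nat_add_iff K).1 ?_
  refine Summable.of_nonneg_of_le (fun n => sq_nonneg _) (fun n => ?_)
    (((summable_nat_add_iff K).2 h).mul_left 64)
  exact key_ineq (hr (n + K)) (hK (n + K) (Nat.le_add_left _ _))

end Aux


set_option maxHeartbeats 1000000 in
/-- If `∑ (σ1 n / σ2 n - 1)^2` diverges, then the two infinite products of centered Gaussian
measures with variances `σ1 n ^ 2` and `σ2 n ^ 2` are mutually singular. -/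
theorem gaussian_product_mutually_singular
    (σ1 σ2 : ℕ → ℝ) (hσ1 : ∀ n, 0 < σ1 n) (hσ2 : ∀ n, 0 < σ2 n)
    (ν1 ν2 : Measure (ℕ → ℝ))
    [IsProbabilityMeasure ν1] [IsProbabilityMeasure ν2]
    (hν1 : ∀ N : ℕ, Measure.map (fun x (i : Fin N) => x i) ν1
      = Measure.pi (fun i : Fin N => gaussianReal 0 ((σ1 i ^ 2).toNNReal)))
    (hν2 : ∀ N : ℕ, Measure.map (fun x (i : Fin N) => x i) ν2
      = Measure.pi (fun i : Fin N => gaussianReal 0 ((σ2 i ^ 2).toNNReal)))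
    (hdiv : ¬ Summable (fun n => (σ1 n / σ2 n - 1) ^ 2)) :
    ∃ A : Set (ℕ → ℝ), MeasurableSet A ∧ ν1 A = 1 ∧ ν2 A = 0 := by
  classical
  set r : ℕ → ℝ := fun n => σ1 n / σ2 n with hrdef
  have hrpos : ∀ n, 0 < r n := fun n => div_pos (hσ1 n) (hσ2 n)
  set Δ : ℕ → ℝ := fun n => 1 / Real.sqrt (1 + r n ^ 2) - 1 / Real.sqrt 2 with hΔdef
  set c : ℝ := 1 / Real.sqrt 2 with hcdef
  set g : ℕ → ℝ → ℝ := fun n t => Real.exp (-(1 / (2 * σ2 n ^ 2) * t ^ 2)) with hgdef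
  set X : ℕ → (ℕ → ℝ) → ℝ := fun n x => Δ n * (g n (x n) - c) with hXdef
  set T : ℕ → (ℕ → ℝ) → ℝ := fun N x => ∑ n ∈ Finset.range N, X n x with hTdef
  set M : ℕ → ℝ := fun N => ∑ n ∈ Finset.range N, Δ n ^ 2 with hMdef
  have hgmeas : ∀ n, Measurable (g n) := by
    intro n
    apply Real.measurable_exp.comp
    exact (measurable_const.mul (measurable_id.pow_const 2)).neg
  have hg0 : ∀ n t, 0 ≤ g n t := fun n t => (Real.exp_pos _).le
  have hg1 : ∀ n t, g n t ≤ 1 := by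
    intro n t
    apply Real.exp_le_one_iff.2
    have h1 : (0:ℝ) ≤ 1 / (2 * σ2 n ^ 2) * t ^ 2 := by positivity
    linarith
  have hsqrt2 : (1:ℝ) ≤ Real.sqrt 2 := by
    nlinarith [Real.sq_sqrt (by norm_num : (0:ℝ) ≤ 2), Real.sqrt_nonneg 2]
  have hc0 : (0:ℝ) ≤ c := by
    rw [hcdef]; positivity
  have hc1 : c ≤ 1 := by
    rw [hcdef, div_le_one (by linarith : (0:ℝ) < Real.sqrt 2)]
    exact hsqrt2
  have hXmeas : ∀ n, Measurable (X n) := fun n =>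
    measurable_const.mul (((hgmeas n).comp (measurable_pi_apply n)).sub measurable_const)
  have hTmeas : ∀ N, Measurable (T N) := fun N =>
    Finset.measurable_sum _ (fun n _ => hXmeas n)
  have hXabs : ∀ n x, |X n x| ≤ |Δ n| := by
    intro n x
    calc |X n x| = |Δ n| * |g n (x n) - c| := abs_mul _ _
      _ ≤ |Δ n| * 1 := by
          refine mul_le_mul_of_nonneg_left ?_ (abs_nonneg _)
          rw [abs_le]
          exact ⟨by linarith [hg0 n (x n)], by linarith [hg1 n (x n)]⟩
      _ = |Δ n| := mul_one _
  -- generic facts valid for both measures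
  have generic : ∀ (ν : Measure (ℕ → ℝ)), IsProbabilityMeasure ν → ∀ (σ : ℕ → ℝ),
      (∀ n, 0 < σ n) →
      (∀ N : ℕ, Measure.map (fun x (i : Fin N) => x i) ν
        = Measure.pi (fun i : Fin N => gaussianReal 0 ((σ i ^ 2).toNNReal))) →
      ∀ N : ℕ,
        (∫ x, T N x ∂ν
          = ∑ n ∈ Finset.range N, Δ n * (1 / Real.sqrt (1 + (σ n / σ2 n) ^ 2) - c))
        ∧ MemLp (T N) 2 ν ∧ variance (T N) ν ≤ M N := by
    intro ν hP σ hσpos hν N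
    haveI := hP
    have hgint : ∀ n, Integrable (fun x : ℕ → ℝ => g n (x n)) ν := by
      intro n
      refine memLp_one_iff_integrable.1 (MemLp.of_bound
        ((hgmeas n).comp (measurable_pi_apply n)).aestronglyMeasurable 1 ?_)
      refine ae_of_all _ fun x => ?_
      rw [Real.norm_eq_abs, abs_of_nonneg (hg0 n (x n))]
      exact hg1 n (x n)
    have hXmem : ∀ n, MemLp (X n) 2 ν := by
      intro n
      refine MemLp.of_bound (hXmeas n).aestronglyMeasurable |Δ n| ?_
      exact ae_of_all _ fun x => by rw [Real.norm_eq_abs]; exact hXabs n x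
    have hEg : ∀ n, ∫ x, g n (x n) ∂ν = 1 / Real.sqrt (1 + (σ n / σ2 n) ^ 2) := by
      intro n
      have h1 : ∫ x, g n (x n) ∂ν = ∫ t, g n t ∂(gaussianReal 0 ((σ n ^ 2).toNNReal)) := by
        rw [← marginal_eval hν n]
        exact (integral_map (measurable_pi_apply n).aemeasurable
          (hgmeas n).aestronglyMeasurable).symm
      rw [h1]
      exact exp_moment (hσ2 n) (hσpos n)
    have hEX : ∀ n, ∫ x, X n x ∂ν = Δ n * (1 / Real.sqrt (1 + (σ n / σ2 n) ^ 2) - c) := by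
      intro n
      have h0 : ∫ x, X n x ∂ν = ∫ x, Δ n * (g n (x n) - c) ∂ν := rfl
      rw [h0, integral_const_mul, integral_sub (hgint n) (integrable_const c),
        integral_const]
      simp [measure_univ, hEg n]
    have hET : ∫ x, T N x ∂ν
        = ∑ n ∈ Finset.range N, Δ n * (1 / Real.sqrt (1 + (σ n / σ2 n) ^ 2) - c) := by
      have h0 : ∫ x, T N x ∂ν = ∑ n ∈ Finset.range N, ∫ x, X n x ∂ν :=
        integral_finset_sum _ (fun n _ => (hXmem n).integrable one_le_two)
      rw [h0]
      exact Finset.sum_congr rfl (fun n _ => hEX n)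
    have hsumfun : T N = ∑ n ∈ Finset.range N, X n := by
      funext x
      simp [hTdef, Finset.sum_apply]
    have hTmem : MemLp (T N) 2 ν := by
      rw [hsumfun]
      exact memLp_finset_sum' _ (fun n _ => hXmem n)
    have hvar : variance (T N) ν ≤ M N := by
      have hpair : Set.Pairwise ↑(Finset.range N) (fun i j => IndepFun (X i) (X j) ν) := by
        intro i _ j _ hij
        have hbase := indep_coords hν hij
        exact hbase.comp
          (measurable_const.mul ((hgmeas i).sub measurable_const))
          (measurable_const.mul ((hgmeas j).sub measurable_const))
      rw [hsumfun, IndepFun.variance_sum (fun n _ => hXmem n) hpair]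
      refine Finset.sum_le_sum (fun n _ => ?_)
      have h1 : variance (X n) ν ≤ ∫ x, (X n x) ^ 2 ∂ν := by
        have h := variance_le_expectation_sq (μ := ν) (X := X n)
          (hXmeas n).aestronglyMeasurable
        simpa using h
      have h2 : ∫ x, (X n x) ^ 2 ∂ν ≤ ∫ _x, Δ n ^ 2 ∂ν := by
        refine integral_mono ?_ (integrable_const _) (fun x => ?_)
        · simpa using (hXmem n).integrable_sq
        · rw [← sq_abs (X n x), ← sq_abs (Δ n)]
          exact pow_le_pow_left₀ (abs_nonneg _) (hXabs n x) 2
      have h3 : ∫ _x, (Δ n : ℝ) ^ 2 ∂ν = Δ n ^ 2 := by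
        simp [measure_univ]
      linarith
    exact ⟨hET, hTmem, hvar⟩
  -- expectations under the two measures
  have hν2E : ∀ N, ∫ x, T N x ∂ν2 = 0 := by
    intro N
    rw [(generic ν2 inferInstance σ2 hσ2 hν2 N).1]
    refine Finset.sum_eq_zero (fun n _ => ?_)
    have h1 : σ2 n / σ2 n = 1 := div_self (hσ2 n).ne'
    rw [h1]
    have h2 : (1:ℝ) + 1 ^ 2 = 2 := by norm_num
    rw [h2, hcdef]
    ring
  have hν1E : ∀ N, ∫ x, T N x ∂ν1 = M N := by
    intro N
    rw [(generic ν1 inferInstance σ1 hσ1 hν1 N).1, hMdef]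
    refine Finset.sum_congr rfl (fun n _ => ?_)
    have h1 : (1:ℝ) / Real.sqrt (1 + (σ1 n / σ2 n) ^ 2) - c = Δ n := rfl
    rw [h1]
    ring
  -- divergence of M
  have hΔdiv : ¬ Summable (fun n => Δ n ^ 2) := by
    intro h
    exact hdiv (summable_transfer hrpos h)
  have hMtend : Tendsto M atTop atTop :=
    (not_summable_iff_tendsto_nat_atTop_of_nonneg (fun n => sq_nonneg (Δ n))).1 hΔdiv
  have hex : ∀ k : ℕ, ∃ N, ((k:ℝ) + 1) ^ 2 ≤ M N := fun k =>
    (hMtend.eventually_ge_atTop _).exists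
  choose φ hφ using hex
  have hMpos : ∀ k, 0 < M (φ k) := fun k => lt_of_lt_of_le (by positivity) (hφ k)
  -- bad sets
  set B1 : ℕ → Set (ℕ → ℝ) := fun k => {x | M (φ k) / 2 ≤ |T (φ k) x - M (φ k)|} with hB1def
  set B2 : ℕ → Set (ℕ → ℝ) := fun k => {x | M (φ k) / 2 ≤ |T (φ k) x|} with hB2def
  have hB1meas : ∀ k, MeasurableSet (B1 k) := fun k =>
    measurableSet_le measurable_const ((hTmeas (φ k)).sub measurable_const).abs
  have hbound : ∀ k (ν : Measure (ℕ → ℝ)), IsProbabilityMeasure ν →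
      MemLp (T (φ k)) 2 ν → variance (T (φ k)) ν ≤ M (φ k) →
      ν {x | M (φ k) / 2 ≤ |T (φ k) x - ∫ y, T (φ k) y ∂ν|}
        ≤ ENNReal.ofReal (4 / ((k:ℝ) + 1) ^ 2) := by
    intro k ν hP hmem hvar
    haveI := hP
    have hc2 : 0 < M (φ k) / 2 := by linarith [hMpos k]
    have h := meas_ge_le_variance_div_sq hmem hc2
    refine h.trans (ENNReal.ofReal_le_ofReal ?_)
    have hsq : (0:ℝ) < (M (φ k) / 2) ^ 2 := by positivity
    calc variance (T (φ k)) ν / (M (φ k) / 2) ^ 2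
        ≤ M (φ k) / (M (φ k) / 2) ^ 2 := by gcongr
      _ = 4 / M (φ k) := by
          field_simp [(hMpos k).ne']
          ring
      _ ≤ 4 / ((k:ℝ) + 1) ^ 2 :=
          div_le_div_of_nonneg_left (by norm_num) (by positivity) (hφ k)
  have hcheb1 : ∀ k, ν1 (B1 k) ≤ ENNReal.ofReal (4 / ((k:ℝ) + 1) ^ 2) := by
    intro k
    obtain ⟨-, hmem, hvar⟩ := generic ν1 inferInstance σ1 hσ1 hν1 (φ k)
    have h := hbound k ν1 inferInstance hmem hvar
    rw [hν1E (φ k)] at h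
    exact h
  have hcheb2 : ∀ k, ν2 (B2 k) ≤ ENNReal.ofReal (4 / ((k:ℝ) + 1) ^ 2) := by
    intro k
    obtain ⟨-, hmem, hvar⟩ := generic ν2 inferInstance σ2 hσ2 hν2 (φ k)
    have h := hbound k ν2 inferInstance hmem hvar
    rw [hν2E (φ k)] at h
    simpa [sub_zero] using h
  have hsummableR : Summable (fun k : ℕ => 4 / ((k:ℝ) + 1) ^ 2) := by
    have h1 : Summable (fun n : ℕ => 1 / (n:ℝ) ^ 2) := by
      simpa using Real.summable_one_div_nat_pow.2 one_lt_two
    have h2 := (summable_nat_add_iff 1).2 h1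
    exact (h2.mul_left 4).congr (fun n => by push_cast; ring)
  have htsum : ∀ (ν : Measure (ℕ → ℝ)) (B : ℕ → Set (ℕ → ℝ)),
      (∀ k, ν (B k) ≤ ENNReal.ofReal (4 / ((k:ℝ) + 1) ^ 2)) → ∑' k, ν (B k) ≠ ⊤ := by
    intro ν B hle
    have h1 : ∑' k, ν (B k) ≤ ∑' k : ℕ, ENNReal.ofReal (4 / ((k:ℝ) + 1) ^ 2) :=
      ENNReal.tsum_le_tsum hle
    rw [← ENNReal.ofReal_tsum_of_nonneg (fun k => by positivity) hsummableR] at h1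
    exact ne_top_of_le_ne_top ENNReal.ofReal_ne_top h1
  have hBC1 : ν1 (limsup B1 atTop) = 0 :=
    measure_limsup_atTop_eq_zero (htsum ν1 B1 hcheb1)
  have hBC2 : ν2 (limsup B2 atTop) = 0 :=
    measure_limsup_atTop_eq_zero (htsum ν2 B2 hcheb2)
  refine ⟨(limsup B1 atTop)ᶜ, (MeasurableSet.measurableSet_limsup hB1meas).compl, ?_, ?_⟩
  · rw [measure_compl (MeasurableSet.measurableSet_limsup hB1meas) (measure_ne_top _ _), hBC1,
      measure_univ]
    simp
  · refine measure_mono_null ?_ hBC2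
    intro x hx
    rw [Set.mem_compl_iff, mem_limsup_iff_frequently_mem, not_frequently] at hx
    rw [mem_limsup_iff_frequently_mem]
    refine (hx.mono fun k hk => ?_).frequently
    have hk' : ¬ (M (φ k) / 2 ≤ |T (φ k) x - M (φ k)|) := hk
    have h1 : |T (φ k) x - M (φ k)| < M (φ k) / 2 := lt_of_not_ge hk'
    have h2 := abs_lt.1 h1
    show M (φ k) / 2 ≤ |T (φ k) x|
    have h3 : M (φ k) / 2 ≤ T (φ k) x := by linarith
    exact h3.trans (le_abs_self _)
end

section
/- Let (a_n)_{n∈ℕ} and (b_n)_{n∈ℕ} be sequences of strictly positive real numbers. Then the infinite product ∏_{n∈ℕ} √(2 a_n b_n / (a_n² + b_n²)) converges to a strictly positive limit (i.e. there exists L > 0 such that the finite partial products converge to L) if and only if the series ∑_{n∈ℕ} (a_n/b_n − 1)² converges. -/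
open Filter Finset

private lemma hell_key_id (x y : ℝ) (hx : 0 < x) (hy : 0 < y) :
    2 * x * y / (x ^ 2 + y ^ 2) = 1 - (x / y - 1) ^ 2 / ((x / y) ^ 2 + 1) := by
  have h1 : x ^ 2 + y ^ 2 ≠ 0 := by positivity
  have h2 : (x / y) ^ 2 + 1 ≠ 0 := by positivity
  have hy' : y ≠ 0 := hy.ne'
  field_simp
  ring

private lemma hell_neg_log_le (t : ℝ) (h0 : 0 ≤ t) (h1 : t ≤ 1 / 2) :
    -Real.log (1 - t) ≤ 2 * t := by
  have hpos : (0:ℝ) < 1 - t := by linarith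
  have h3 : Real.exp (-(2 * t)) ≤ 1 - t := by
    have h4 : 1 + 2 * t ≤ Real.exp (2 * t) := by
      have := Real.add_one_le_exp (2 * t); linarith
    rw [Real.exp_neg, inv_le_iff_one_le_mul₀ (Real.exp_pos _)]
    calc (1:ℝ) ≤ (1 - t) * (1 + 2 * t) := by nlinarith
    _ ≤ (1 - t) * Real.exp (2 * t) := by nlinarith
  have h5 := Real.log_le_log (Real.exp_pos _) h3
  rw [Real.log_exp] at h5
  linarith

private lemma hell_le_neg_log (t : ℝ) (h1 : t < 1) :
    t ≤ -Real.log (1 - t) := by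
  have := Real.log_le_sub_one_of_pos (x := 1 - t) (by linarith)
  linarith

private lemma hell_summable_of_eventually_le {u v : ℕ → ℝ} (hu : ∀ n, 0 ≤ u n)
    (h : ∀ᶠ n in atTop, u n ≤ v n) (hv : Summable v) : Summable u := by
  obtain ⟨N, hN⟩ := eventually_atTop.mp h
  have h1 : Summable (fun n => u (n + N)) :=
    Summable.of_nonneg_of_le (fun n => hu _) (fun n => hN _ (Nat.le_add_left N n))
      ((summable_nat_add_iff N).mpr hv)
  exact (summable_nat_add_iff N).mp h1

/-- The infinite product `∏ √(2 aₙ bₙ / (aₙ² + bₙ²))` converges to a strictly positive limit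
if and only if `∑ (aₙ/bₙ - 1)²` converges. -/
theorem hellinger_product_pos_iff_summable
    (a b : ℕ → ℝ) (ha : ∀ n, 0 < a n) (hb : ∀ n, 0 < b n) :
    (∃ L > (0 : ℝ), Tendsto (fun N => ∏ n ∈ Finset.range N,
        Real.sqrt (2 * a n * b n / ((a n) ^ 2 + (b n) ^ 2))) atTop (nhds L)) ↔
    Summable (fun n => (a n / b n - 1) ^ 2) := by
  set f : ℕ → ℝ := fun n => Real.sqrt (2 * a n * b n / ((a n) ^ 2 + (b n) ^ 2)) with hf
  set r : ℕ → ℝ := fun n => a n / b n with hrdef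
  set t : ℕ → ℝ := fun n => (r n - 1) ^ 2 / ((r n) ^ 2 + 1) with htdef
  have hr : ∀ n, 0 < r n := fun n => div_pos (ha n) (hb n)
  have hinpos : ∀ n, 0 < 2 * a n * b n / ((a n) ^ 2 + (b n) ^ 2) := by
    intro n; have := ha n; have := hb n; positivity
  have htid : ∀ n, 2 * a n * b n / ((a n) ^ 2 + (b n) ^ 2) = 1 - t n :=
    fun n => hell_key_id _ _ (ha n) (hb n)
  have ht0 : ∀ n, 0 ≤ t n := by
    intro n; have := hr n; positivity
  have ht1 : ∀ n, t n < 1 := by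
    intro n; have := hinpos n; rw [htid n] at this; linarith
  have hfpos : ∀ n, 0 < f n := fun n => Real.sqrt_pos.mpr (hinpos n)
  set g : ℕ → ℝ := fun n => -Real.log (f n) with hgdef
  have hlogf : ∀ n, Real.log (f n) = Real.log (1 - t n) / 2 := by
    intro n
    simp only [hf]
    rw [Real.log_sqrt (le_of_lt (hinpos n)), htid n]
  have hg0 : ∀ n, 0 ≤ g n := by
    intro n
    simp only [hgdef, hlogf n]
    have : Real.log (1 - t n) ≤ 0 := Real.log_nonpos (by have := ht1 n; linarith) (by have := ht0 n; linarith)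
    linarith
  have htg : ∀ n, t n ≤ 2 * g n := by
    intro n
    have h1 := hell_le_neg_log (t n) (ht1 n)
    simp only [hgdef, hlogf n]
    linarith
  have hts : ∀ n, (r n - 1) ^ 2 = t n * ((r n) ^ 2 + 1) := by
    intro n
    have hd : (r n) ^ 2 + 1 ≠ 0 := by positivity
    simp only [htdef]
    field_simp
  have htle : ∀ n, t n ≤ (r n - 1) ^ 2 := by
    intro n
    rw [hts n]
    nlinarith [ht0 n, sq_nonneg (r n)]
  -- Step 1: Summable g ↔ Summable (r - 1)^2
  have hiff : Summable g ↔ Summable (fun n => (r n - 1) ^ 2) := by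
    constructor
    · intro hg
      apply hell_summable_of_eventually_le (fun n => sq_nonneg _) _ (hg.mul_left 34)
      have hlim : Tendsto g atTop (nhds 0) := hg.tendsto_atTop_zero
      filter_upwards [hlim.eventually_le_const (show (0:ℝ) < 1/4 by norm_num)] with n hn
      have htn : t n ≤ 1 / 2 := le_trans (htg n) (by linarith)
      have hrle : r n ≤ 4 := by
        by_contra hc
        push_neg at hc
        have := hts n
        nlinarith [ht0 n, hr n]
      calc (r n - 1) ^ 2 = t n * ((r n) ^ 2 + 1) := hts n
        _ ≤ t n * 17 := by
            have h17 : (r n) ^ 2 + 1 ≤ 17 := by nlinarith [hr n]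
            exact mul_le_mul_of_nonneg_left h17 (ht0 n)
        _ ≤ 2 * g n * 17 := by nlinarith [htg n]
        _ = 34 * g n := by ring
    · intro hs
      apply hell_summable_of_eventually_le hg0 _ hs
      have hlim : Tendsto (fun n => (r n - 1) ^ 2) atTop (nhds 0) := hs.tendsto_atTop_zero
      filter_upwards [hlim.eventually_le_const (show (0:ℝ) < 1/2 by norm_num)] with n hn
      have htn : t n ≤ 1 / 2 := le_trans (htle n) (by linarith)
      have h2 := hell_neg_log_le (t n) (ht0 n) htn
      have : g n ≤ t n := by
        simp only [hgdef, hlogf n]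
        linarith
      linarith [htle n]
  rw [← hiff]
  -- Step 2: product convergence ↔ Summable g
  have hlogprod : ∀ N, Real.log (∏ n ∈ Finset.range N, f n)
      = ∑ n ∈ Finset.range N, Real.log (f n) := by
    intro N
    exact Real.log_prod (fun n _ => (hfpos n).ne')
  constructor
  · rintro ⟨L, hL, hP⟩
    have hlog : Tendsto (fun N => ∑ n ∈ Finset.range N, Real.log (f n)) atTop
        (nhds (Real.log L)) := by
      have := (Real.continuousAt_log hL.ne').tendsto.comp hP
      simpa only [Function.comp_def, hlogprod] using this
    have hneg : Tendsto (fun N => ∑ n ∈ Finset.range N, g n) atTop (nhds (-Real.log L)) := by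
      have := hlog.neg
      simpa [hgdef, Finset.sum_neg_distrib] using this
    have hmono : Monotone (fun N => ∑ n ∈ Finset.range N, g n) := by
      intro i j hij
      exact Finset.sum_le_sum_of_subset_of_nonneg
        (Finset.range_subset_range.mpr hij) (fun k _ _ => hg0 k)
    exact summable_of_sum_range_le hg0 (fun n => hmono.ge_of_tendsto hneg n)
  · intro hg
    have hsl : Summable (fun n => Real.log (f n)) := by
      have := hg.neg
      simpa [hgdef] using this
    have hsum : Tendsto (fun N => ∑ n ∈ Finset.range N, Real.log (f n)) atTop
        (nhds (∑' n, Real.log (f n))) := hsl.hasSum.tendsto_sum_nat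
    refine ⟨Real.exp (∑' n, Real.log (f n)), Real.exp_pos _, ?_⟩
    have hexp := (Real.continuous_exp.tendsto _).comp hsum
    have hPe : ∀ N, Real.exp (∑ n ∈ Finset.range N, Real.log (f n))
        = ∏ n ∈ Finset.range N, f n := by
      intro N
      rw [Real.exp_sum]
      exact Finset.prod_congr rfl (fun n _ => Real.exp_log (hfpos n))
    simpa only [Function.comp_def, hPe] using hexp
end
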